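/- Assume 0 < α ≤ 1 and that every finite subset C of M.E satisfies δ(C) ≥ 0. Let k ≥ 1 and let (B_i)_{i ∈ ℕ} be a family of k-element finite subsets of M.E. Then for every natural number n there exist a finite set Ω ⊆ ℕ with |Ω| ≥ n and a finite set A such that: (1) for each i ∈ Ω, A ⊆ B_i and δ(C) ≥ δ(A) for every C with A ⊆ C ⊆ B_i (i.e. A is closed in B_i); and (2) B_i ∩ B_j = A for all distinct i, j ∈ Ω. -/

import Mathlib

open Set

/-- The rank of a (finite) set in a matroid: the supremum of cardinalities of independent
subsets. -/
noncomputable def mRk {V : Type*} (M : Matroid V) (A : Set V) : ℕ :=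
  sSup {n : ℕ | ∃ I : Set V, M.Indep I ∧ I ⊆ A ∧ I.ncard = n}

/-- The predimension `δ(A) = r(A) - α·|A ∩ P|` of a finite set `A`, where `P` is the set of
colored elements. -/
noncomputable def mDelta {V : Type*} (M : Matroid V) (P : Set V) (α : ℝ) (A : Set V) : ℝ :=
  (mRk M A : ℝ) - α * ((A ∩ P).ncard : ℝ)

section Aux

variable {V : Type*} {M : Matroid V} {P X Y I J : Set V} {α : ℝ}

lemma my_mRk_bdd (hX : X.Finite) :
    BddAbove {n : ℕ | ∃ I : Set V, M.Indep I ∧ I ⊆ X ∧ I.ncard = n} :=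
  ⟨X.ncard, fun _ ⟨_, _, hIX, hn⟩ => hn ▸ Set.ncard_le_ncard hIX hX⟩

lemma my_le_mRk (hX : X.Finite) (hJ : M.Indep J) (hJX : J ⊆ X) : J.ncard ≤ mRk M X :=
  le_csSup (my_mRk_bdd hX) ⟨J, hJ, hJX, rfl⟩

lemma my_mRk_eq (hX : X.Finite) (hI : M.IsBasis' I X) : mRk M X = I.ncard := by
  refine le_antisymm (csSup_le ⟨0, ∅, M.empty_indep, empty_subset _, by simp⟩ ?_)
    (my_le_mRk hX hI.indep hI.subset)
  rintro n ⟨J, hJ, hJX, rfl⟩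
  obtain ⟨J', hJ', hJJ'⟩ := hJ.subset_isBasis'_of_subset hJX
  have h1 : J.encard ≤ I.encard := (Set.encard_le_encard hJJ').trans_eq (hJ'.encard_eq_encard hI)
  have hIfin : I.Finite := hX.subset hI.subset
  rw [Set.ncard_def, Set.ncard_def]
  exact ENat.toNat_le_toNat h1 hIfin.encard_lt_top.ne

lemma my_mRk_le_ncard (hX : X.Finite) : mRk M X ≤ X.ncard := by
  obtain ⟨I, hI⟩ := M.exists_isBasis' X
  rw [my_mRk_eq hX hI]
  exact Set.ncard_le_ncard hI.subset hX

lemma my_mRk_submod (hX : X.Finite) (hY : Y.Finite) :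
    mRk M (X ∪ Y) + mRk M (X ∩ Y) ≤ mRk M X + mRk M Y := by
  obtain ⟨I, hI⟩ := M.exists_isBasis' (X ∩ Y)
  obtain ⟨J, hJ, hIJ⟩ := hI.indep.subset_isBasis'_of_subset
    (hI.subset.trans (inter_subset_left.trans subset_union_left))
  have hXY : (X ∪ Y).Finite := hX.union hY
  have hJfin : J.Finite := hXY.subset hJ.subset
  have hJi : J ∩ (X ∩ Y) = I :=
    subset_antisymm (hI.2 ⟨hJ.indep.subset inter_subset_left, inter_subset_right⟩
      (subset_inter hIJ hI.subset)) (subset_inter hIJ hI.subset)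
  rw [my_mRk_eq hXY hJ, my_mRk_eq (hX.inter_of_left Y) hI]
  have h1 : (J ∩ X).ncard ≤ mRk M X :=
    my_le_mRk hX (hJ.indep.subset inter_subset_left) inter_subset_right
  have h2 : (J ∩ Y).ncard ≤ mRk M Y :=
    my_le_mRk hY (hJ.indep.subset inter_subset_left) inter_subset_right
  have h3 : (J ∩ X).ncard + (J ∩ Y).ncard = J.ncard + I.ncard := by
    have := Set.ncard_union_add_ncard_inter (J ∩ X) (J ∩ Y) (hJfin.inter_of_left X)
      (hJfin.inter_of_left Y)
    rw [← inter_union_distrib_left, ← inter_inter_distrib_left, hJi,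
      inter_eq_self_of_subset_left hJ.subset] at this
    omega
  omega

lemma my_mDelta_submod (hα : 0 ≤ α) (hX : X.Finite) (hY : Y.Finite) :
    mDelta M P α (X ∪ Y) ≤ mDelta M P α X + mDelta M P α Y - mDelta M P α (X ∩ Y) := by
  have hr := my_mRk_submod (M := M) hX hY
  have hc : ((X ∪ Y) ∩ P).ncard + ((X ∩ Y) ∩ P).ncard = (X ∩ P).ncard + (Y ∩ P).ncard := by
    have h := Set.ncard_union_add_ncard_inter (X ∩ P) (Y ∩ P) (hX.inter_of_left P)
      (hY.inter_of_left P)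
    rw [← union_inter_distrib_right] at h
    have he : X ∩ Y ∩ P = X ∩ P ∩ (Y ∩ P) := by
      ext y; simp only [mem_inter_iff]; tauto
    rw [he, h]
  unfold mDelta
  have hr' : (mRk M (X ∪ Y) : ℝ) + mRk M (X ∩ Y) ≤ (mRk M X : ℝ) + mRk M Y := by
    exact_mod_cast hr
  have hc' : (((X ∪ Y) ∩ P).ncard : ℝ) + ((X ∩ Y) ∩ P).ncard
      = ((X ∩ P).ncard : ℝ) + ((Y ∩ P).ncard : ℝ) := by exact_mod_cast hc
  nlinarith [mul_le_mul_of_nonneg_left (le_of_eq hc') hα]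

lemma my_mDelta_le (hα : 0 ≤ α) (hX : X.Finite) : mDelta M P α X ≤ (X.ncard : ℝ) := by
  unfold mDelta
  have h1 : (mRk M X : ℝ) ≤ X.ncard := by exact_mod_cast my_mRk_le_ncard hX
  have h2 : 0 ≤ α * ((X ∩ P).ncard : ℝ) := by positivity
  linarith

lemma my_sunflower {V : Type*} (k : ℕ) : ∀ (B : ℕ → Set V) (S : Set ℕ), S.Infinite →
    (∀ i ∈ S, (B i).Finite) → (∀ i ∈ S, (B i).ncard = k) →
    ∃ T A, T ⊆ S ∧ T.Infinite ∧ A.Finite ∧ (∀ i ∈ T, A ⊆ B i) ∧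
      ∀ i ∈ T, ∀ j ∈ T, i ≠ j → B i ∩ B j = A := by
  induction k with
  | zero =>
    intro B S hS hfin hcard
    refine ⟨S, ∅, subset_rfl, hS, finite_empty, fun i _ => empty_subset _,
      fun i hi j hj hij => ?_⟩
    have : B i = ∅ := (Set.ncard_eq_zero (hfin i hi)).mp (hcard i hi)
    simp [this]
  | succ k ih =>
    intro B S hS hfin hcard
    by_cases hx : ∃ x, {i | i ∈ S ∧ x ∈ B i}.Infinite
    · obtain ⟨x, hxinf⟩ := hx
      obtain ⟨T, A', hTS', hTinf, hA'fin, hA'sub, hA'int⟩ :=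
        ih (fun i => B i \ {x}) {i | i ∈ S ∧ x ∈ B i} hxinf
          (fun i hi => (hfin i hi.1).diff)
          (fun i hi => by
            simp [Set.ncard_diff_singleton_of_mem hi.2, hcard i hi.1])
      have hTS : T ⊆ S := fun i hi => (hTS' hi).1
      have hxB : ∀ i ∈ T, x ∈ B i := fun i hi => (hTS' hi).2
      refine ⟨T, insert x A', hTS, hTinf, hA'fin.insert x, fun i hi =>
        insert_subset (hxB i hi) ((hA'sub i hi).trans diff_subset), fun i hi j hj hij => ?_⟩
      have h := hA'int i hi j hj hij
      rw [← h]
      ext y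
      simp only [mem_inter_iff, mem_insert_iff, mem_diff, mem_singleton_iff]
      by_cases hy : y = x
      · simp [hy, hxB i hi, hxB j hj]
      · tauto
    · push_neg at hx
      have hfib : ∀ x, {i | i ∈ S ∧ x ∈ B i}.Finite := fun x => hx x
      have hGood : ∀ F : Finset ℕ, ∃ i, (↑F : Set ℕ) ⊆ S →
          i ∈ S ∧ i ∉ F ∧ ∀ j ∈ F, Disjoint (B i) (B j) := by
        intro F
        by_cases hFS : (↑F : Set ℕ) ⊆ S
        · have hBad : (↑F ∪ ⋃ j ∈ F, ⋃ x ∈ B j, {i | i ∈ S ∧ x ∈ B i}).Finite := by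
            refine (F.finite_toSet).union ?_
            exact Set.Finite.biUnion F.finite_toSet fun j hj =>
              Set.Finite.biUnion (hfin j (hFS hj)) fun x _ => hfib x
          obtain ⟨i, hiS, hibad⟩ := (hS.diff hBad).nonempty
          refine ⟨i, fun _ => ⟨hiS, fun hiF => hibad (Or.inl hiF), fun j hj => ?_⟩⟩
          rw [Set.disjoint_left]
          intro y hyi hyj
          exact hibad (Or.inr (Set.mem_biUnion hj (Set.mem_biUnion hyj ⟨hiS, hyi⟩)))
        · exact ⟨0, fun h => absurd h hFS⟩
      choose c hc using hGood
      set g : ℕ → Finset ℕ := fun m => Nat.rec ∅ (fun _ F => insert (c F) F) m with hg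
      have hgs : ∀ m, g (m + 1) = insert (c (g m)) (g m) := fun _ => rfl
      have hinv : ∀ m, (↑(g m) : Set ℕ) ⊆ S ∧ (g m).card = m ∧
          ∀ i ∈ g m, ∀ j ∈ g m, i ≠ j → Disjoint (B i) (B j) := by
        intro m
        induction m with
        | zero => simp [hg]
        | succ m ihm =>
          obtain ⟨hsub, hcard', hdisj⟩ := ihm
          obtain ⟨hcS, hcF, hcd⟩ := hc (g m) hsub
          rw [hgs]
          refine ⟨?_, ?_, ?_⟩
          · intro i hi
            rcases Finset.mem_insert.mp hi with h | h
            · exact h ▸ hcS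
            · exact hsub h
          · rw [Finset.card_insert_of_notMem hcF, hcard']
          · intro i hi j hj hij
            rcases Finset.mem_insert.mp hi with h | h <;>
              rcases Finset.mem_insert.mp hj with h' | h'
            · exact absurd (h.trans h'.symm) hij
            · exact h ▸ hcd j h'
            · exact (h' ▸ hcd i h).symm
            · exact hdisj i h j h' hij
      have hmono : ∀ m m', m ≤ m' → g m ⊆ g m' := by
        intro m m' h
        induction h with
        | refl => exact subset_rfl
        | step h ih' => exact ih'.trans (by rw [hgs]; exact Finset.subset_insert _ _)
      refine ⟨{i | ∃ m, i ∈ g m}, ∅, fun i ⟨m, hm⟩ => (hinv m).1 hm, ?_, finite_empty,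
        fun i _ => empty_subset _, fun i ⟨mi, hi⟩ j ⟨mj, hj⟩ hij => ?_⟩
      · intro hTf
        have h1 : ∀ m, (↑(g m) : Set ℕ) ⊆ {i | ∃ m, i ∈ g m} := fun m i hi => ⟨m, hi⟩
        have h2 := Set.ncard_le_ncard (h1 ({i | ∃ m, i ∈ g m}.ncard + 1)) hTf
        rw [Set.ncard_coe_finset] at h2
        have h3 := (hinv ({i | ∃ m, i ∈ g m}.ncard + 1)).2.1
        omega
      · have hgi : i ∈ g (max mi mj) := hmono mi _ (le_max_left _ _) hi
        have hgj : j ∈ g (max mi mj) := hmono mj _ (le_max_right _ _) hj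
        exact Set.disjoint_iff_inter_eq_empty.mp ((hinv _).2.2 i hgi j hgj hij)

end Aux

theorem bicolored_delta_system {V : Type*} (M : Matroid V) (P : Set V) (α : ℝ)
    (hα0 : 0 < α) (hα1 : α ≤ 1)
    (hK : ∀ C : Set V, C ⊆ M.E → C.Finite → 0 ≤ mDelta M P α C)
    (k : ℕ) (hk : 1 ≤ k) (B : ℕ → Set V)
    (hBE : ∀ i, B i ⊆ M.E) (hBfin : ∀ i, (B i).Finite) (hBcard : ∀ i, (B i).ncard = k)
    (n : ℕ) :
    ∃ (Ω : Set ℕ) (A : Set V), Ω.Finite ∧ n ≤ Ω.ncard ∧ A.Finite ∧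
      (∀ i ∈ Ω, A ⊆ B i ∧
        ∀ C : Set V, A ⊆ C → C ⊆ B i → mDelta M P α A ≤ mDelta M P α C) ∧
      (∀ i ∈ Ω, ∀ j ∈ Ω, i ≠ j → B i ∩ B j = A) := by
  classical
  obtain ⟨T, A, -, hTinf, hAfin, hAsub, hAint⟩ :=
    my_sunflower k B univ infinite_univ (fun i _ => hBfin i) (fun i _ => hBcard i)
  obtain ⟨i₀, hi₀⟩ := hTinf.nonempty
  have hAk : (A.ncard : ℝ) ≤ k := by
    exact_mod_cast (Set.ncard_le_ncard (hAsub i₀ hi₀) (hBfin i₀)).trans_eq (hBcard i₀)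
  set bad : Set ℕ := {i | i ∈ T ∧ ∃ C, A ⊆ C ∧ C ⊆ B i ∧ mDelta M P α C < mDelta M P α A}
    with hbaddef
  have hbadfin : bad.Finite := by
    rw [← Set.not_infinite]
    intro hinf
    set Cw : ℕ → Set V := fun i =>
      if h : ∃ C, A ⊆ C ∧ C ⊆ B i ∧ mDelta M P α C < mDelta M P α A then h.choose else ∅
      with hCwdef
    have hCw : ∀ i ∈ bad, A ⊆ Cw i ∧ Cw i ⊆ B i ∧ mDelta M P α (Cw i) < mDelta M P α A := by
      intro i hi
      have h := hi.2
      simp only [hCwdef, dif_pos h]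
      exact h.choose_spec
    have hCfin : ∀ i ∈ bad, (Cw i).Finite := fun i hi => (hBfin i).subset (hCw i hi).2.1
    have hφ : ∃ v ∈ (Set.Iic k ×ˢ Set.Iic k : Set (ℕ × ℕ)),
        {i | i ∈ bad ∧ (mRk M (Cw i), ((Cw i) ∩ P).ncard) = v}.Infinite := by
      by_contra hno
      push_neg at hno
      have hsub : bad ⊆ ⋃ v ∈ (Set.Iic k ×ˢ Set.Iic k : Set (ℕ × ℕ)),
          {i | i ∈ bad ∧ (mRk M (Cw i), ((Cw i) ∩ P).ncard) = v} := by
        intro i hi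
        have h1 : mRk M (Cw i) ≤ k := (my_mRk_le_ncard (hCfin i hi)).trans
          ((Set.ncard_le_ncard (hCw i hi).2.1 (hBfin i)).trans_eq (hBcard i))
        have h2 : ((Cw i) ∩ P).ncard ≤ k :=
          (Set.ncard_le_ncard (inter_subset_left.trans (hCw i hi).2.1) (hBfin i)).trans_eq
            (hBcard i)
        exact mem_iUnion₂.mpr ⟨_, ⟨mem_Iic.mpr h1, mem_Iic.mpr h2⟩, ⟨hi, rfl⟩⟩
      exact hinf (Set.Finite.subset (Set.Finite.biUnion ((Set.finite_Iic k).prod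
        (Set.finite_Iic k)) fun v hv => hno v hv) hsub)
    obtain ⟨⟨r, s⟩, -, hfib⟩ := hφ
    set fib := {i | i ∈ bad ∧ (mRk M (Cw i), ((Cw i) ∩ P).ncard) = (r, s)} with hfibdef
    set d : ℝ := (r : ℝ) - α * s with hd
    have hfd : ∀ i ∈ fib, mDelta M P α (Cw i) = d := by
      intro i hi
      have h := hi.2
      rw [Prod.mk.injEq] at h
      simp only [mDelta, hd, h.1, h.2]
    have hdlt : d < mDelta M P α A := by
      obtain ⟨i, hi⟩ := hfib.nonempty
      rw [← hfd i hi]; exact (hCw i hi.1).2.2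
    have hgap : 0 < mDelta M P α A - d := by linarith
    obtain ⟨m, hm⟩ := exists_nat_gt ((k : ℝ) / (mDelta M P α A - d))
    have hmk : (k : ℝ) < m * (mDelta M P α A - d) := (div_lt_iff₀ hgap).mp hm
    have hm1 : 1 ≤ m := by
      rcases Nat.eq_zero_or_pos m with h | h
      · rw [h] at hmk
        simp at hmk
        have : (1 : ℝ) ≤ (k : ℝ) := by exact_mod_cast hk
        linarith
      · exact h
    obtain ⟨I, hIfib, hIfin, hIcard⟩ := hfib.exists_subset_ncard_eq m
    have key : ∀ J : Set ℕ, J.Finite → J ⊆ fib → J.Nonempty →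
        mDelta M P α (⋃ i ∈ J, Cw i) ≤
          mDelta M P α A + (J.ncard : ℝ) * (d - mDelta M P α A) := by
      intro J hJfin
      refine Set.Finite.induction_on J hJfin (fun _ h => absurd rfl (Set.nonempty_iff_ne_empty.mp h)) ?_
      rintro a J' haJ' hJ'fin ihJ hsub hne
      have haf : a ∈ fib := hsub (mem_insert a J')
      have hCa := hCw a haf.1
      have hCafin : (Cw a).Finite := hCfin a haf.1
      have hU : (⋃ i ∈ insert a J', Cw i) = Cw a ∪ ⋃ i ∈ J', Cw i := by
        simp [Set.biUnion_insert]
      have hnc : (insert a J').ncard = J'.ncard + 1 := Set.ncard_insert_of_notMem haJ' hJ'fin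
      rcases J'.eq_empty_or_nonempty with hJe | hJne
      · subst hJe
        rw [hU]
        simp only [Set.biUnion_empty, Set.union_empty, hnc, hfd a haf, Set.ncard_empty]
        push_cast
        linarith
      · have hJ'sub : J' ⊆ fib := (subset_insert a J').trans hsub
        have ihs := ihJ hJ'sub hJne
        have hUfin : (⋃ i ∈ J', Cw i).Finite :=
          Set.Finite.biUnion hJ'fin fun i hi => hCfin i (hJ'sub hi).1
        have hint : Cw a ∩ ⋃ i ∈ J', Cw i = A := by
          apply subset_antisymm
          · rintro y ⟨hy1, hy2⟩
            rw [mem_iUnion₂] at hy2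
            obtain ⟨i, hi, hyi⟩ := hy2
            have hii : i ∈ fib := hJ'sub hi
            have hne' : a ≠ i := fun h => haJ' (h ▸ hi)
            have hs2 : Cw a ∩ Cw i ⊆ B a ∩ B i :=
              inter_subset_inter hCa.2.1 (hCw i hii.1).2.1
            have hBB : B a ∩ B i = A := hAint a haf.1.1 i hii.1.1 hne'
            exact hBB ▸ hs2 ⟨hy1, hyi⟩
          · obtain ⟨i, hi⟩ := hJne
            intro y hy
            exact ⟨hCa.1 hy, mem_iUnion₂.mpr ⟨i, hi, (hCw i (hJ'sub hi).1).1 hy⟩⟩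
        have hsm := my_mDelta_submod (M := M) (P := P) hα0.le hCafin hUfin
        rw [hint] at hsm
        rw [hU, hnc]
        rw [hfd a haf] at hsm
        push_cast
        linarith
    have hIne : I.Nonempty := Set.nonempty_of_ncard_ne_zero (by omega)
    have hUE : (⋃ i ∈ I, Cw i) ⊆ M.E :=
      Set.iUnion₂_subset fun i hi => ((hCw i (hIfib hi).1).2.1).trans (hBE i)
    have hUfin : (⋃ i ∈ I, Cw i).Finite :=
      Set.Finite.biUnion hIfin fun i hi => hCfin i (hIfib hi).1
    have h0 := hK _ hUE hUfin
    have hk2 := key I hIfin hIfib hIne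
    rw [hIcard] at hk2
    have hδAk : mDelta M P α A ≤ (k : ℝ) := (my_mDelta_le hα0.le hAfin).trans hAk
    linarith
  have hgood := hTinf.diff hbadfin
  obtain ⟨Ω, hΩsub, hΩfin, hΩcard⟩ := hgood.exists_subset_ncard_eq n
  refine ⟨Ω, A, hΩfin, hΩcard.ge, hAfin, fun i hi => ⟨hAsub i (hΩsub hi).1, ?_⟩,
    fun i hi j hj hij => hAint i (hΩsub hi).1 j (hΩsub hj).1 hij⟩
  intro C hAC hCB
  by_contra hlt
  push_neg at hlt
  exact (hΩsub hi).2 ⟨(hΩsub hi).1, C, hAC, hCB, hlt⟩
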